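/- arXiv:2103.08895 — 3 statements merged into one kernel-verified Lean document; each statement's English description precedes it below -/
import Mathlib

section
/- Let T ∈ R^{d1×d2} be a nonzero rank-r matrix with singular value decomposition T = U Σ V^T, where U ∈ R^{d1×r} has orthonormal columns. If the spikiness condition sqrt(d1·d2) · ||T||_∞ / ||T||_F ≤ μ1 holds, then for every row index i, ||e_i^T U||_2 ≤ sqrt(r/d1) · μ1 · κ, where κ = σ_max(T)/σ_min(T) is the condition number (ratio of largest to smallest nonzero singular value). -/
open Real Matrix

/-- Spikiness implies incoherence: for a nonzero rank-`r` matrix `T = U Σ Vᵀ`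
with orthonormal `U`, `V`, singular values between `σmin > 0` and `σmax`,
if `√(d1 d2) ‖T‖_∞ / ‖T‖_F ≤ μ1`, then each row of `U` has norm at most
`√(r/d1) · μ1 · (σmax/σmin)`. -/
theorem incoherence_of_spikiness {d1 d2 r : ℕ}
    (T : Matrix (Fin d1) (Fin d2) ℝ) (U : Matrix (Fin d1) (Fin r) ℝ)
    (V : Matrix (Fin d2) (Fin r) ℝ) (σ : Fin r → ℝ)
    (μ1 σmin σmax : ℝ)
    (hT0 : T ≠ 0)
    (hSVD : T = U * Matrix.diagonal σ * Vᵀ)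
    (hU : Uᵀ * U = 1) (hV : Vᵀ * V = 1)
    (hσmin : 0 < σmin) (hσ : ∀ j, σmin ≤ σ j ∧ σ j ≤ σmax)
    (hspiki : Real.sqrt ((d1 : ℝ) * d2) * (⨆ p : Fin d1 × Fin d2, |T p.1 p.2|) /
        Real.sqrt (∑ i, ∑ j, T i j ^ 2) ≤ μ1) :
    ∀ i : Fin d1, Real.sqrt (∑ j, U i j ^ 2) ≤
      Real.sqrt ((r : ℝ) / d1) * μ1 * (σmax / σmin) := by
  intro i
  -- dimensions positive
  have hd1 : 0 < d1 := Fin.pos i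
  have hd2 : 0 < d2 := by
    rcases Nat.eq_zero_or_pos d2 with h | h
    · exfalso; apply hT0; subst h; ext a b; exact b.elim0
    · exact h
  -- T * Tᵀ = U * diagonal σ² * Uᵀ
  have hTT : T * Tᵀ = U * Matrix.diagonal (fun j => σ j ^ 2) * Uᵀ := by
    rw [hSVD]
    rw [Matrix.transpose_mul, Matrix.transpose_mul, Matrix.transpose_transpose,
      Matrix.diagonal_transpose]
    calc U * Matrix.diagonal σ * Vᵀ * (V * (Matrix.diagonal σ * Uᵀ))
        = U * Matrix.diagonal σ * (Vᵀ * V) * (Matrix.diagonal σ * Uᵀ) := by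
          rw [Matrix.mul_assoc (U * Matrix.diagonal σ), ← Matrix.mul_assoc Vᵀ,
            Matrix.mul_assoc (U * Matrix.diagonal σ)]
      _ = U * Matrix.diagonal (fun j => σ j ^ 2) * Uᵀ := by
          rw [hV, Matrix.mul_one, Matrix.mul_assoc U, ← Matrix.mul_assoc (Matrix.diagonal σ),
            Matrix.diagonal_mul_diagonal, ← Matrix.mul_assoc]
          congr 2
          ext j
          ring
  -- row sum identity
  have hrow : ∀ i' : Fin d1, ∑ k, (T i' k) ^ 2 = ∑ j, σ j ^ 2 * U i' j ^ 2 := by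
    intro i'
    have h1 : (T * Tᵀ) i' i' = ∑ k, T i' k ^ 2 := by
      simp [Matrix.mul_apply, sq]
    have h2 : (U * Matrix.diagonal (fun j => σ j ^ 2) * Uᵀ) i' i'
        = ∑ j, σ j ^ 2 * U i' j ^ 2 := by
      simp only [Matrix.mul_apply, Matrix.transpose_apply, Matrix.diagonal_apply,
        mul_ite, mul_zero, Finset.sum_ite_eq', Finset.mem_univ, if_true]
      exact Finset.sum_congr rfl (fun j _ => by ring)
    rw [← h1, hTT, h2]
  -- column norm of U is 1
  have hcol : ∀ j : Fin r, ∑ i' : Fin d1, U i' j ^ 2 = 1 := by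
    intro j
    have := congrFun (congrFun hU j) j
    simpa [Matrix.mul_apply, Matrix.one_apply, sq] using this
  -- Frobenius norm squared = sum of σ²
  have hF2 : (∑ i', ∑ k, T i' k ^ 2) = ∑ j, σ j ^ 2 := by
    calc (∑ i', ∑ k, T i' k ^ 2) = ∑ i', ∑ j, σ j ^ 2 * U i' j ^ 2 := by
          exact Finset.sum_congr rfl (fun i' _ => hrow i')
      _ = ∑ j, σ j ^ 2 * ∑ i', U i' j ^ 2 := by
          rw [Finset.sum_comm]
          exact Finset.sum_congr rfl (fun j _ => by rw [Finset.mul_sum])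
      _ = ∑ j, σ j ^ 2 := by
          exact Finset.sum_congr rfl (fun j _ => by rw [hcol j, mul_one])
  set S : ℝ := ⨆ p : Fin d1 × Fin d2, |T p.1 p.2| with hSdef
  set F2 : ℝ := ∑ i', ∑ k, T i' k ^ 2 with hF2def
  have hSle : ∀ i' k, |T i' k| ≤ S := by
    intro i' k
    exact le_ciSup (f := fun p : Fin d1 × Fin d2 => |T p.1 p.2|)
      (Set.Finite.bddAbove (Set.finite_range _)) (i', k)
  have hS0 : 0 ≤ S := le_trans (abs_nonneg _) (hSle i ⟨0, hd2⟩)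
  -- F2 positive
  have hF2pos : 0 < F2 := by
    have hne : ∃ i' k, T i' k ≠ 0 := by
      by_contra h
      push_neg at h
      exact hT0 (by ext i' k; simpa using h i' k)
    obtain ⟨i', k, hik⟩ := hne
    have h1 : 0 < ∑ k', T i' k' ^ 2 := by
      apply Finset.sum_pos' (fun _ _ => sq_nonneg _)
      exact ⟨k, Finset.mem_univ k, by positivity⟩
    apply Finset.sum_pos' (fun _ _ => Finset.sum_nonneg (fun _ _ => sq_nonneg _))
    exact ⟨i', Finset.mem_univ i', h1⟩
  have hFpos : 0 < Real.sqrt F2 := Real.sqrt_pos.mpr hF2pos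
  -- from spikiness
  have hspiki' : Real.sqrt ((d1 : ℝ) * d2) * S ≤ μ1 * Real.sqrt F2 := by
    rw [div_le_iff₀ hFpos] at hspiki
    exact hspiki
  have hμ0 : 0 ≤ μ1 := by
    have h0 : 0 ≤ Real.sqrt ((d1 : ℝ) * d2) * S := mul_nonneg (Real.sqrt_nonneg _) hS0
    nlinarith [hFpos]
  -- squared spikiness: d1*d2*S^2 ≤ μ1^2 * F2
  have hsq : (d1 : ℝ) * d2 * S ^ 2 ≤ μ1 ^ 2 * F2 := by
    have h1 : (Real.sqrt ((d1 : ℝ) * d2) * S) ^ 2 ≤ (μ1 * Real.sqrt F2) ^ 2 := by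
      apply pow_le_pow_left₀ (mul_nonneg (Real.sqrt_nonneg _) hS0) hspiki' 2
    rw [mul_pow, mul_pow, Real.sq_sqrt (by positivity : (0:ℝ) ≤ (d1:ℝ) * d2),
      Real.sq_sqrt (le_of_lt hF2pos)] at h1
    exact h1
  -- σ sum bound
  have hσsum : (∑ j, σ j ^ 2) ≤ (r : ℝ) * σmax ^ 2 := by
    calc (∑ j, σ j ^ 2) ≤ ∑ _j : Fin r, σmax ^ 2 := by
          apply Finset.sum_le_sum
          intro j _
          have h1 := (hσ j).1
          have h2 := (hσ j).2
          nlinarith [hσmin]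
      _ = (r : ℝ) * σmax ^ 2 := by simp [Finset.sum_const, mul_comm]
  -- row bound: σmin² A ≤ row sum ≤ d2 S²
  set A : ℝ := ∑ j, U i j ^ 2 with hAdef
  have hA0 : 0 ≤ A := Finset.sum_nonneg (fun _ _ => sq_nonneg _)
  have h1 : σmin ^ 2 * A ≤ ∑ k, T i k ^ 2 := by
    rw [hrow i, Finset.mul_sum]
    apply Finset.sum_le_sum
    intro j _
    exact mul_le_mul_of_nonneg_right (pow_le_pow_left₀ hσmin.le (hσ j).1 2) (sq_nonneg _)
  have h2 : (∑ k, T i k ^ 2) ≤ (d2 : ℝ) * S ^ 2 := by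
    calc (∑ k, T i k ^ 2) ≤ ∑ _k : Fin d2, S ^ 2 := by
          apply Finset.sum_le_sum
          intro k _
          have := hSle i k
          nlinarith [abs_nonneg (T i k), sq_abs (T i k)]
      _ = (d2 : ℝ) * S ^ 2 := by simp [Finset.sum_const, mul_comm]
  have hrowF : (∑ k, T i k ^ 2) ≤ F2 := by
    rw [hF2def]
    apply Finset.single_le_sum (f := fun i' => ∑ k, T i' k ^ 2)
      (fun i' _ => Finset.sum_nonneg (fun _ _ => sq_nonneg _)) (Finset.mem_univ i)
  -- key inequality
  have key : (d1 : ℝ) * (σmin ^ 2 * A) ≤ (r : ℝ) * (μ1 ^ 2 * σmax ^ 2) := by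
    have hd1R : (0:ℝ) < d1 := by exact_mod_cast hd1
    have c1 : (d1 : ℝ) * (σmin ^ 2 * A) ≤ (d1 : ℝ) * ((d2:ℝ) * S ^ 2) := by
      apply mul_le_mul_of_nonneg_left (le_trans h1 h2) (le_of_lt hd1R)
    have c2 : μ1 ^ 2 * F2 ≤ μ1 ^ 2 * ((r:ℝ) * σmax ^ 2) := by
      apply mul_le_mul_of_nonneg_left _ (sq_nonneg μ1)
      rw [hF2]; exact hσsum
    calc (d1 : ℝ) * (σmin ^ 2 * A) ≤ (d1 : ℝ) * ((d2:ℝ) * S ^ 2) := c1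
      _ = (d1 : ℝ) * d2 * S ^ 2 := by ring
      _ ≤ μ1 ^ 2 * F2 := hsq
      _ ≤ μ1 ^ 2 * ((r:ℝ) * σmax ^ 2) := c2
      _ = (r : ℝ) * (μ1 ^ 2 * σmax ^ 2) := by ring
  -- conclude
  have hd1R : (0:ℝ) < d1 := by exact_mod_cast hd1
  have hfinal : A ≤ ((r : ℝ) / d1) * μ1 ^ 2 * (σmax / σmin) ^ 2 := by
    rw [div_mul_eq_mul_div, div_pow, div_mul_div_comm, le_div_iff₀ (by positivity)]
    linarith [key]
  calc Real.sqrt A ≤ Real.sqrt (((r : ℝ) / d1) * μ1 ^ 2 * (σmax / σmin) ^ 2) :=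
        Real.sqrt_le_sqrt hfinal
    _ = Real.sqrt ((r : ℝ) / d1) * μ1 * (σmax / σmin) := by
        rw [show ((r:ℝ)/d1) * μ1 ^ 2 * (σmax/σmin) ^ 2
            = (Real.sqrt ((r:ℝ)/d1) * μ1 * (σmax/σmin)) ^ 2 by
          rw [mul_pow, mul_pow, Real.sq_sqrt (by positivity : (0:ℝ) ≤ (r:ℝ)/d1)]]
        exact Real.sqrt_sq (mul_nonneg (mul_nonneg (Real.sqrt_nonneg _) hμ0)
          (div_nonneg (le_trans hσmin.le (le_trans (hσ ⟨0, by
            rcases Nat.eq_zero_or_pos r with h | h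
            · exfalso
              apply hT0
              subst h
              ext a b
              simp [hSVD, Matrix.mul_apply]
            · exact h⟩).1 (hσ _).2)) hσmin.le))
end

section
/- Let X_1, ..., X_n be i.i.d. Bernoulli(q) random variables with sum S. If n·q ≤ 3·log(1/δ) for some δ ∈ (0,1), then P(S ≥ 10·log(1/δ)) ≤ δ. -/
open MeasureTheory ProbabilityTheory Real

/-- Chernoff-type bound in the sparse regime: for i.i.d. Bernoulli(q) variables
with `n q ≤ 3 log(1/δ)`, `P(S ≥ 10 log(1/δ)) ≤ δ`. -/
theorem bernoulli_chernoff_sparse {Ω : Type*} [MeasurableSpace Ω] (μ : Measure Ω)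
    [IsProbabilityMeasure μ] {n : ℕ} (X : Fin n → Ω → ℝ) (q δ : ℝ)
    (hq0 : 0 ≤ q) (hq1 : q ≤ 1) (hδ : δ ∈ Set.Ioo (0 : ℝ) 1)
    (hmeas : ∀ i, Measurable (X i))
    (hindep : iIndepFun X μ)
    (hval : ∀ i ω, X i ω = 0 ∨ X i ω = 1)
    (hp : ∀ i, μ {ω | X i ω = 1} = ENNReal.ofReal q)
    (hnq : (n : ℝ) * q ≤ 3 * Real.log (1 / δ)) :
    μ {ω | 10 * Real.log (1 / δ) ≤ ∑ i, X i ω} ≤ ENNReal.ofReal δ := by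
  obtain ⟨hδ0, hδ1⟩ := hδ
  set L := Real.log (1 / δ) with hL
  have hL0 : 0 ≤ L := by
    apply Real.log_nonneg
    rw [le_div_iff₀ hδ0]; linarith
  -- the sum as a single function
  set S : Ω → ℝ := ∑ i, X i with hS
  have hSapp : ∀ ω, S ω = ∑ i, X i ω := fun ω => by simp [hS]
  have hSmeas : Measurable S := by
    have : S = fun ω => ∑ i, X i ω := funext hSapp
    rw [this]
    exact Finset.measurable_sum _ fun i _ => (hmeas i)
  -- integral of each X i is q
  have hXint : ∀ i, ∫ ω, X i ω ∂μ = q := by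
    intro i
    have heq : X i = Set.indicator (X i ⁻¹' {1}) (fun _ => (1 : ℝ)) := by
      funext ω
      rcases hval i ω with h | h <;>
        simp [Set.indicator_apply, Set.mem_preimage, h]
    rw [show (fun ω => X i ω) = X i from rfl, heq,
      MeasureTheory.integral_indicator_const _ ((hmeas i) (measurableSet_singleton 1))]
    have : X i ⁻¹' {1} = {ω | X i ω = 1} := by ext ω; simp [Set.mem_preimage]
    rw [this, measureReal_def, hp i, smul_eq_mul, mul_one, ENNReal.toReal_ofReal hq0]
  -- each X i is integrable
  have hXintegrable : ∀ i, Integrable (X i) μ := by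
    intro i
    refine Integrable.mono' (integrable_const (1 : ℝ)) (hmeas i).aestronglyMeasurable ?_
    filter_upwards with ω
    rcases hval i ω with h | h <;> simp [h]
  -- exp (1 * X i ω) = 1 + (e - 1) * X i ω
  have hexpX : ∀ i ω, Real.exp (1 * X i ω) = 1 + (Real.exp 1 - 1) * X i ω := by
    intro i ω
    rcases hval i ω with h | h <;> simp [h] <;> ring
  -- mgf of each X i at t = 1
  have hmgf : ∀ i, mgf (X i) μ 1 = 1 + (Real.exp 1 - 1) * q := by
    intro i
    unfold mgf
    have : (fun ω => Real.exp (1 * X i ω)) = fun ω => 1 + (Real.exp 1 - 1) * X i ω := by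
      funext ω; exact hexpX i ω
    rw [this, integral_add (integrable_const 1) ((hXintegrable i).const_mul _),
      integral_const, integral_const_mul, hXint i]
    simp
  -- integrability of exp (1 * S)
  have hSbound : ∀ ω, S ω ≤ n := by
    intro ω
    rw [hSapp]
    calc ∑ i, X i ω ≤ ∑ _i : Fin n, (1 : ℝ) := by
          apply Finset.sum_le_sum
          intro i _
          rcases hval i ω with h | h <;> simp [h]
      _ = n := by simp
  have hSint : Integrable (fun ω => Real.exp (1 * S ω)) μ := by
    refine Integrable.mono' (integrable_const (Real.exp n)) ?_ ?_
    · exact (hSmeas.const_mul 1).exp.aestronglyMeasurable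
    · filter_upwards with ω
      rw [Real.norm_of_nonneg (Real.exp_nonneg _), one_mul]
      exact Real.exp_le_exp.mpr (hSbound ω)
  -- Chernoff bound
  have hmarkov := measure_ge_le_exp_mul_mgf (X := S) (μ := μ) (t := 1)
    (10 * L) zero_le_one hSint
  rw [hindep.mgf_sum hmeas Finset.univ] at hmarkov
  have hprod : ∏ i, mgf (X i) μ 1 = (1 + (Real.exp 1 - 1) * q) ^ n := by
    simp [hmgf]
  rw [hprod] at hmarkov
  -- bound the right-hand side
  have he1 : (0:ℝ) ≤ Real.exp 1 - 1 := by
    nlinarith [Real.add_one_le_exp (1:ℝ)]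
  have hbase0 : (0:ℝ) ≤ 1 + (Real.exp 1 - 1) * q := by nlinarith
  have hpow : (1 + (Real.exp 1 - 1) * q) ^ n ≤ Real.exp ((Real.exp 1 - 1) * ((n:ℝ) * q)) := by
    calc (1 + (Real.exp 1 - 1) * q) ^ n ≤ (Real.exp ((Real.exp 1 - 1) * q)) ^ n := by
          apply pow_le_pow_left₀ hbase0
          have := Real.add_one_le_exp ((Real.exp 1 - 1) * q)
          linarith
      _ = Real.exp ((Real.exp 1 - 1) * ((n:ℝ) * q)) := by
          rw [← Real.exp_nat_mul]; ring_nf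
  have hfinal : Real.exp (-1 * (10 * L)) * (1 + (Real.exp 1 - 1) * q) ^ n ≤ δ := by
    have h1 : Real.exp (-1 * (10 * L)) * (1 + (Real.exp 1 - 1) * q) ^ n
        ≤ Real.exp (-1 * (10 * L)) * Real.exp ((Real.exp 1 - 1) * ((n:ℝ) * q)) := by
      apply mul_le_mul_of_nonneg_left hpow (Real.exp_nonneg _)
    rw [← Real.exp_add] at h1
    refine h1.trans ?_
    have harg : -1 * (10 * L) + (Real.exp 1 - 1) * ((n:ℝ) * q) ≤ -L := by
      have hnq' : (Real.exp 1 - 1) * ((n:ℝ) * q) ≤ (Real.exp 1 - 1) * (3 * L) :=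
        mul_le_mul_of_nonneg_left hnq he1
      have he4 : Real.exp 1 ≤ 4 := by
        have := Real.exp_one_lt_d9
        linarith
      nlinarith
    calc Real.exp (-1 * (10 * L) + (Real.exp 1 - 1) * ((n:ℝ) * q))
        ≤ Real.exp (-L) := Real.exp_le_exp.mpr harg
      _ = δ := by
          rw [hL, Real.log_div one_ne_zero (ne_of_gt hδ0), Real.log_one]
          simp [Real.exp_log hδ0]
  -- conclude
  have hset : {ω | 10 * L ≤ ∑ i, X i ω} = {ω | 10 * L ≤ S ω} := by
    ext ω; simp [hSapp]
  rw [hset, ← ENNReal.ofReal_toReal (measure_ne_top μ _)]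
  exact ENNReal.ofReal_le_ofReal (hmarkov.trans hfinal)
end

section
/- Let A and B be d×d real symmetric matrices, with B = A + E. Let u be a unit-norm top eigenvector of A with eigenvalue λ₁(A), and suppose the eigengap λ₁(A) - λ₂(A) > 2||E||_op. Then the top eigenvector v of B satisfies min(||v - u||, ||v + u||) ≤ 2√2 ||E||_op / (λ₁(A) - λ₂(A) - 2||E||_op). -/
open Matrix Real

/-- Davis–Kahan type perturbation bound for the top eigenvector: for symmetric
`A` and `B = A + E` with `‖E‖_op ≤ εop` and eigengap `λ₁(A) - λ₂(A) > 2εop`,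
the unit top eigenvectors `u` of `A` and `v` of `B` satisfy
`min(‖v - u‖, ‖v + u‖) ≤ 2√2 εop / (λ₁ - λ₂ - 2εop)`. -/
theorem davis_kahan_top_eigenvector {d : ℕ} (A B E : Matrix (Fin d) (Fin d) ℝ)
    (u v : Fin d → ℝ) (lam1 lam2 mu1 εop : ℝ)
    (hAsymm : Aᵀ = A) (hBsymm : Bᵀ = B)
    (hBE : B = A + E)
    (hu : A.mulVec u = lam1 • u) (hunorm : ∑ i, u i ^ 2 = 1)
    (hlam1 : ∀ w : Fin d → ℝ, ∑ i, w i ^ 2 = 1 → w ⬝ᵥ A.mulVec w ≤ lam1)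
    (hlam2 : ∀ w : Fin d → ℝ, ∑ i, w i ^ 2 = 1 → w ⬝ᵥ u = 0 → w ⬝ᵥ A.mulVec w ≤ lam2)
    (hv : B.mulVec v = mu1 • v) (hvnorm : ∑ i, v i ^ 2 = 1)
    (hmu1 : ∀ w : Fin d → ℝ, ∑ i, w i ^ 2 = 1 → w ⬝ᵥ B.mulVec w ≤ mu1)
    (hεop : 0 ≤ εop)
    (hE : ∀ w : Fin d → ℝ,
      Real.sqrt (∑ i, (E.mulVec w) i ^ 2) ≤ εop * Real.sqrt (∑ i, w i ^ 2))
    (hgap : 2 * εop < lam1 - lam2) :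
    min (Real.sqrt (∑ i, (v i - u i) ^ 2)) (Real.sqrt (∑ i, (v i + u i) ^ 2)) ≤
      2 * Real.sqrt 2 * εop / (lam1 - lam2 - 2 * εop) := by
  set g : ℝ := lam1 - lam2 - 2 * εop with hgdef
  have hg : 0 < g := by simp [hgdef]; linarith
  -- Cauchy-Schwarz for dot products
  have CS : ∀ x y : Fin d → ℝ, x ⬝ᵥ y ≤
      Real.sqrt (∑ i, x i ^ 2) * Real.sqrt (∑ i, y i ^ 2) := by
    intro x y
    simpa [dotProduct] using Real.sum_mul_le_sqrt_mul_sqrt Finset.univ x y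
  -- dot product of x with E.mulVec y bounded
  have hEdot : ∀ x y : Fin d → ℝ, x ⬝ᵥ E.mulVec y ≤
      Real.sqrt (∑ i, x i ^ 2) * (εop * Real.sqrt (∑ i, y i ^ 2)) := by
    intro x y
    calc x ⬝ᵥ E.mulVec y ≤ Real.sqrt (∑ i, x i ^ 2) * Real.sqrt (∑ i, (E.mulVec y) i ^ 2) :=
          CS x (E.mulVec y)
      _ ≤ _ := by
          apply mul_le_mul_of_nonneg_left (hE y) (Real.sqrt_nonneg _)
  have huu : u ⬝ᵥ u = 1 := by simpa [dotProduct, sq] using hunorm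
  have hvvd : v ⬝ᵥ v = 1 := by simpa [dotProduct, sq] using hvnorm
  set c : ℝ := u ⬝ᵥ v with hcdef
  set w : Fin d → ℝ := v - c • u with hwdef
  have hvw : v = c • u + w := by simp [hwdef]
  have hwu : w ⬝ᵥ u = 0 := by
    simp [hwdef, sub_dotProduct, smul_dotProduct, huu, dotProduct_comm v u, hcdef]
  have huw : u ⬝ᵥ w = 0 := by rw [dotProduct_comm]; exact hwu
  set s : ℝ := w ⬝ᵥ w with hsdef
  have hs_sum : s = ∑ i, w i ^ 2 := by simp [hsdef, dotProduct, sq]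
  have hs0 : 0 ≤ s := by rw [hs_sum]; positivity
  have hsc : s = 1 - c ^ 2 := by
    have : v ⬝ᵥ v = c ^ 2 * (u ⬝ᵥ u) + 2 * c * (u ⬝ᵥ w) + s := by
      rw [hvw]
      simp [add_dotProduct, dotProduct_add, smul_dotProduct, dotProduct_smul,
        dotProduct_comm w u, hwu, hsdef]
      ring
    rw [hvvd, huu, huw] at this
    linarith
  -- Step A: lam1 - εop ≤ mu1
  have hstepA : lam1 - εop ≤ mu1 := by
    have h1 : u ⬝ᵥ B.mulVec u ≤ mu1 := hmu1 u hunorm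
    have h2 : u ⬝ᵥ B.mulVec u = lam1 + u ⬝ᵥ E.mulVec u := by
      rw [hBE, add_mulVec, dotProduct_add, hu, dotProduct_smul, huu, smul_eq_mul, mul_one]
    have h3 : -(εop) ≤ u ⬝ᵥ E.mulVec u := by
      have := hEdot (-u) u
      have hsq : Real.sqrt (∑ i, u i ^ 2) = 1 := by rw [hunorm]; simp
      have hsq' : Real.sqrt (∑ i, (-u) i ^ 2) = 1 := by
        simpa [neg_sq] using hsq
      rw [hsq, hsq'] at this
      simp [neg_dotProduct] at this
      linarith
    linarith
  -- w ⬝ Aw ≤ lam2 * s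
  have hwAw : w ⬝ᵥ A.mulVec w ≤ lam2 * s := by
    rcases eq_or_lt_of_le hs0 with h0 | hpos
    · have hw0 : w = 0 := by
        have hsum : ∑ i, w i ^ 2 = 0 := by rw [← hs_sum, ← h0]
        funext i
        have := (Finset.sum_eq_zero_iff_of_nonneg (fun i _ => sq_nonneg (w i))).mp hsum i
          (Finset.mem_univ i)
        exact pow_eq_zero_iff (n := 2) (by norm_num) |>.mp this
      simp [hw0, ← h0]
    · set t : ℝ := Real.sqrt s with htdef
      have ht : 0 < t := Real.sqrt_pos.mpr hpos
      have hts : t ^ 2 = s := Real.sq_sqrt hs0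
      set w' : Fin d → ℝ := t⁻¹ • w with hw'def
      have hw'norm : ∑ i, w' i ^ 2 = 1 := by
        have h1 : ∑ i, w' i ^ 2 = t⁻¹ ^ 2 * s := by
          simp [hw'def, mul_pow, ← Finset.mul_sum, ← hs_sum]
        rw [h1, ← hts]
        field_simp
      have hw'u : w' ⬝ᵥ u = 0 := by simp [hw'def, smul_dotProduct, hwu]
      have := hlam2 w' hw'norm hw'u
      have hexp : w' ⬝ᵥ A.mulVec w' = t⁻¹ ^ 2 * (w ⬝ᵥ A.mulVec w) := by
        simp [hw'def, smul_dotProduct, mulVec_smul, dotProduct_smul]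
        ring
      rw [hexp] at this
      have := mul_le_mul_of_nonneg_left this (le_of_lt (by positivity : (0:ℝ) < t ^ 2))
      calc w ⬝ᵥ A.mulVec w = t ^ 2 * (t⁻¹ ^ 2 * (w ⬝ᵥ A.mulVec w)) := by
            field_simp
        _ ≤ t ^ 2 * lam2 := this
        _ = lam2 * s := by rw [hts]; ring
  -- Step B: g * s ≤ εop * sqrt s
  have hstepB : g * s ≤ εop * Real.sqrt s := by
    have h1 : w ⬝ᵥ B.mulVec v = mu1 * s := by
      rw [hv, dotProduct_smul]
      have : w ⬝ᵥ v = s := by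
        rw [hvw, dotProduct_add, dotProduct_smul, dotProduct_comm w u, huw]
        simp [hsdef]
      rw [this]; simp [smul_eq_mul]
    have h2 : w ⬝ᵥ A.mulVec v = w ⬝ᵥ A.mulVec w := by
      conv_lhs => rw [hvw]
      rw [mulVec_add, mulVec_smul, hu, dotProduct_add, dotProduct_smul, smul_eq_mul]
      rw [dotProduct_smul]
      simp [hwu, smul_eq_mul]
    have h3 : w ⬝ᵥ E.mulVec v ≤ Real.sqrt s * εop := by
      have := hEdot w v
      rw [hvnorm] at this
      simpa [← hs_sum, mul_comm] using this
    have h4 : w ⬝ᵥ B.mulVec v = w ⬝ᵥ A.mulVec v + w ⬝ᵥ E.mulVec v := by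
      rw [hBE, add_mulVec, dotProduct_add]
    have hmu1s : mu1 * s ≤ lam2 * s + Real.sqrt s * εop := by
      rw [← h1, h4, h2]
      linarith [hwAw, h3]
    have hgmu : g ≤ mu1 - lam2 := by simp [hgdef]; linarith
    nlinarith [mul_le_mul_of_nonneg_right hgmu hs0]
  -- Step C: sqrt s ≤ εop / g
  have hstepC : Real.sqrt s ≤ εop / g := by
    set t : ℝ := Real.sqrt s with htdef
    have ht0 : 0 ≤ t := Real.sqrt_nonneg _
    have hts : t ^ 2 = s := Real.sq_sqrt hs0
    rcases eq_or_lt_of_le ht0 with h0 | hpos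
    · rw [← h0]; positivity
    · rw [le_div_iff₀ hg]
      nlinarith [hstepB]
  -- Step D
  have hc2 : c ^ 2 ≤ 1 := by nlinarith
  have hdist1 : ∑ i, (v i - u i) ^ 2 = 2 - 2 * c := by
    have : ∑ i, (v i - u i) ^ 2 = (∑ i, v i ^ 2) - 2 * (u ⬝ᵥ v) + ∑ i, u i ^ 2 := by
      simp [dotProduct, Finset.mul_sum, ← Finset.sum_add_distrib, ← Finset.sum_sub_distrib]
      congr 1; funext i; ring
    rw [this, hunorm, hvnorm, ← hcdef]; ring
  have hdist2 : ∑ i, (v i + u i) ^ 2 = 2 + 2 * c := by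
    have : ∑ i, (v i + u i) ^ 2 = (∑ i, v i ^ 2) + 2 * (u ⬝ᵥ v) + ∑ i, u i ^ 2 := by
      simp [dotProduct, Finset.mul_sum, ← Finset.sum_add_distrib]
      congr 1; funext i; ring
    rw [this, hunorm, hvnorm, ← hcdef]; ring
  have hkey : Real.sqrt (2 * s) ≤ 2 * Real.sqrt 2 * εop / g := by
    rw [Real.sqrt_mul (by norm_num : (0:ℝ) ≤ 2)]
    have h1 : Real.sqrt 2 * Real.sqrt s ≤ Real.sqrt 2 * (εop / g) :=
      mul_le_mul_of_nonneg_left hstepC (Real.sqrt_nonneg 2)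
    have hnn : 0 ≤ Real.sqrt 2 * (εop / g) := by positivity
    have h2 : Real.sqrt 2 * (εop / g) ≤ 2 * Real.sqrt 2 * εop / g := by
      calc Real.sqrt 2 * (εop / g) ≤ 2 * (Real.sqrt 2 * (εop / g)) := by linarith
        _ = 2 * Real.sqrt 2 * εop / g := by ring
    linarith
  have habs : |c| ≤ 1 := (sq_le_one_iff_abs_le_one c).mp hc2
  have hc1 : c ≤ 1 := le_trans (le_abs_self c) habs
  have hc1' : -1 ≤ c := neg_le_of_abs_le habs
  rcases le_or_gt 0 c with hc | hc
  · have hle : 2 - 2 * c ≤ 2 * s := by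
      have h := mul_nonneg hc (by linarith : (0:ℝ) ≤ 1 - c)
      have h' : c * (1 - c) = c - c ^ 2 := by ring
      linarith [hsc]
    calc min (Real.sqrt (∑ i, (v i - u i) ^ 2)) (Real.sqrt (∑ i, (v i + u i) ^ 2))
        ≤ Real.sqrt (∑ i, (v i - u i) ^ 2) := min_le_left _ _
      _ ≤ Real.sqrt (2 * s) := by rw [hdist1]; exact Real.sqrt_le_sqrt hle
      _ ≤ _ := hkey
  · have hle : 2 + 2 * c ≤ 2 * s := by
      have h := mul_nonneg (by linarith : (0:ℝ) ≤ -c) (by linarith : (0:ℝ) ≤ 1 + c)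
      have h' : (-c) * (1 + c) = -c - c ^ 2 := by ring
      linarith [hsc]
    calc min (Real.sqrt (∑ i, (v i - u i) ^ 2)) (Real.sqrt (∑ i, (v i + u i) ^ 2))
        ≤ Real.sqrt (∑ i, (v i + u i) ^ 2) := min_le_right _ _
      _ ≤ Real.sqrt (2 * s) := by rw [hdist2]; exact Real.sqrt_le_sqrt hle
      _ ≤ _ := hkey
end
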